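/- Let G be a group with generators t_i indexed by Z/(l+1) (l ≥ 2), subject to the braid relations of the cyclic diagram of type Â_l, together with an automorphism ζ of G cyclically shifting the generators, and impose the relations Δ_{Z/(l+1)−{i}} = Δ_{Z/(l+1)−{i,j}} ζ^{i−j} for all distinct i,j. Then t_l^2 = 1 in the resulting quotient. -/
import Mathlib


/-!
STATEMENT 1: Let `G` be a group with generators `t i` indexed by `ZMod (l+1)` (`l ≥ 2`),
subject to the braid relations of the cyclic diagram of type `Â_l`, together with an
(inner realization of an) automorphism `ζ` of `G` cyclically shifting the generators,
and impose the relations `Δ_{Z/(l+1)−{i}} = Δ_{Z/(l+1)−{i,j}} ζ^{i−j}` for all distinct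
`i, j`.  Then `t_l ^ 2 = 1` in the resulting quotient.

Here for a chain of generators `t_{i+1}, ..., t_{i+m}` (type `A_m`), the Garside element
is `(t_{i+1} ⋯ t_{i+m})(t_{i+1} ⋯ t_{i+m-1}) ⋯ t_{i+1}`; removing the vertex `i` from the
polygon leaves the chain `t_{i+1}, ..., t_{i+l}`, and removing two distinct vertices
`i, j` leaves two chains `t_{i+1}, ..., t_{j-1}` and `t_{j+1}, ..., t_{i-1}`, whose
Garside elements commute and whose product is `Δ_{Z/(l+1)−{i,j}}`.
-/

namespace Stmt1

variable {G : Type*} [Group G]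

/-- The product `t_{i+1} t_{i+2} ⋯ t_{i+m}`. -/
def chainC {n : ℕ} (t : ZMod n → G) (i : ZMod n) (m : ℕ) : G :=
  ((List.range m).map (fun s => t (i + (s : ZMod n) + 1))).prod

/-- The Garside element of the type `A_m` chain `t_{i+1}, ..., t_{i+m}`:
`(t_{i+1} ⋯ t_{i+m})(t_{i+1} ⋯ t_{i+m-1}) ⋯ t_{i+1}`. -/
def garsideC {n : ℕ} (t : ZMod n → G) (i : ZMod n) (m : ℕ) : G :=
  (((List.range m).reverse).map (fun s => chainC t i (s + 1))).prod

def revC {n : ℕ} (t : ZMod n → G) : ℕ → G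
  | 0 => 1
  | m + 1 => t ((m : ZMod n) + 1) * revC t m

lemma chainC_zero {n : ℕ} (t : ZMod n → G) (i : ZMod n) : chainC t i 0 = 1 := by
  simp [chainC]

lemma garsideC_zero {n : ℕ} (t : ZMod n → G) (i : ZMod n) : garsideC t i 0 = 1 := by
  simp [garsideC]

lemma chainC_succ {n : ℕ} (t : ZMod n → G) (i : ZMod n) (m : ℕ) :
    chainC t i (m + 1) = chainC t i m * t (i + (m : ZMod n) + 1) := by
  simp [chainC, List.range_succ]

lemma garsideC_succ {n : ℕ} (t : ZMod n → G) (i : ZMod n) (m : ℕ) :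
    garsideC t i (m + 1) = chainC t i (m + 1) * garsideC t i m := by
  simp [garsideC, List.range_succ]

lemma cast_ne_cast {n a b : ℕ} [NeZero n] (ha : a < n) (hb : b < n) (hab : a ≠ b) :
    (a : ZMod n) ≠ (b : ZMod n) := by
  intro h
  exact hab (by rw [← ZMod.val_cast_of_lt ha, ← ZMod.val_cast_of_lt hb, h])

lemma commute_chain {n : ℕ} (t : ZMod n → G) (x : G) (i : ZMod n) (m : ℕ)
    (h : ∀ u : ℕ, u < m → Commute x (t (i + (u : ZMod n) + 1))) :
    Commute x (chainC t i m) := by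
  induction m with
  | zero => rw [chainC_zero]; exact Commute.one_right x
  | succ m ih =>
    rw [chainC_succ]
    exact (ih (fun u hu => h u (by omega))).mul_right (h m (by omega))

lemma commute_garside {n : ℕ} (t : ZMod n → G) (x : G) (i : ZMod n) (m : ℕ)
    (h : ∀ u : ℕ, u < m → Commute x (t (i + (u : ZMod n) + 1))) :
    Commute x (garsideC t i m) := by
  induction m with
  | zero => rw [garsideC_zero]; exact Commute.one_right x
  | succ m ih =>
    rw [garsideC_succ]
    exact (commute_chain t x i (m + 1) h).mul_right (ih (fun u hu => h u (by omega)))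

lemma garside_rev {n : ℕ} (t : ZMod n → G) (M : ℕ)
    (hc : ∀ a b : ℕ, 1 ≤ b → b + 2 ≤ a → a ≤ M → Commute (t a) (t b)) :
    ∀ m : ℕ, m + 1 ≤ M → garsideC t 0 (m + 1) = garsideC t 0 m * revC t (m + 1) := by
  intro m
  induction m with
  | zero =>
    intro _
    rw [garsideC_succ, chainC_succ, chainC_zero, garsideC_zero]
    show _ = _ * (t (((0 : ℕ) : ZMod n) + 1) * revC t 0)
    simp [revC]
  | succ m ih =>
    intro hm
    have IH := ih (by omega)
    have hcast : (0 : ZMod n) + ((m + 1 : ℕ) : ZMod n) + 1 = ((m + 2 : ℕ) : ZMod n) := by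
      push_cast; ring
    have hcom : Commute (t (((m + 2 : ℕ) : ZMod n))) (garsideC t 0 m) := by
      apply commute_garside
      intro u hu
      have hcst : ((0 : ZMod n) + (u : ZMod n) + 1) = ((u + 1 : ℕ) : ZMod n) := by
        push_cast; ring
      rw [hcst]
      exact hc (m + 2) (u + 1) (by omega) (by omega) (by omega)
    have eR : revC t (m + 2) = t (((m + 1 : ℕ) : ZMod n) + 1) * revC t (m + 1) := rfl
    have eR' : (((m + 1 : ℕ) : ZMod n) + 1) = ((m + 2 : ℕ) : ZMod n) := by push_cast; ring
    calc garsideC t 0 (m + 2)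
        = chainC t 0 (m + 2) * garsideC t 0 (m + 1) := garsideC_succ t 0 (m + 1)
      _ = (chainC t 0 (m + 1) * t ((m + 2 : ℕ) : ZMod n)) * (garsideC t 0 m * revC t (m + 1)) := by
          rw [IH, chainC_succ, hcast]
      _ = chainC t 0 (m + 1) * (t ((m + 2 : ℕ) : ZMod n) * garsideC t 0 m) * revC t (m + 1) := by
          simp only [mul_assoc]
      _ = chainC t 0 (m + 1) * (garsideC t 0 m * t ((m + 2 : ℕ) : ZMod n)) * revC t (m + 1) := by
          rw [hcom.eq]
      _ = (chainC t 0 (m + 1) * garsideC t 0 m) * (t ((m + 2 : ℕ) : ZMod n) * revC t (m + 1)) := by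
          simp only [mul_assoc]
      _ = garsideC t 0 (m + 1) * revC t (m + 2) := by
          rw [← garsideC_succ, eR, eR']


theorem square_of_generator_eq_one (l : ℕ) (hl : 2 ≤ l)
    (t : ZMod (l + 1) → G) (z : G)
    -- the `t i` (together with `z`) generate `G`
    (hgen : Subgroup.closure (Set.range t ∪ {z}) = ⊤)
    -- `ζ` cyclically shifts the generators
    (hconj : ∀ i : ZMod (l + 1), z * t i * z⁻¹ = t (i + 1))
    -- braid relations of the cyclic diagram `Â_l`
    (hbraid : ∀ i : ZMod (l + 1), t i * t (i + 1) * t i = t (i + 1) * t i * t (i + 1))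
    (hcomm : ∀ i j : ZMod (l + 1), i ≠ j → i + 1 ≠ j → j + 1 ≠ i →
      t i * t j = t j * t i)
    -- the relations `Δ_{Z/(l+1)−{i}} = Δ_{Z/(l+1)−{i,j}} ζ^{i−j}` for all distinct `i, j`
    (hrel : ∀ i j : ZMod (l + 1), i ≠ j →
      garsideC t i l =
        garsideC t i ((j - i).val - 1) * garsideC t j ((i - j).val - 1) *
          z ^ (i - j).val) :
    (t (l : ZMod (l + 1))) ^ 2 = 1 := by
  obtain ⟨k, rfl⟩ : ∃ k, l = k + 2 := ⟨l - 2, by omega⟩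
  -- commutation hypothesis in natural-number form
  have hc : ∀ a b : ℕ, 1 ≤ b → b + 2 ≤ a → a ≤ k + 2 →
      Commute (t a) (t b) := by
    intro a b hb hba ha
    have ha' : a < k + 2 + 1 := by omega
    have hb' : b < k + 2 + 1 := by omega
    have h1 : (a : ZMod (k + 2 + 1)) ≠ (b : ZMod (k + 2 + 1)) :=
      cast_ne_cast ha' hb' (by omega)
    have h2 : (a : ZMod (k + 2 + 1)) + 1 ≠ (b : ZMod (k + 2 + 1)) := by
      have e : ((a : ZMod (k + 2 + 1)) + 1) = ((a + 1 : ℕ) : ZMod (k + 2 + 1)) := by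
        push_cast; ring
      rw [e]
      by_cases hak : a = k + 2
      · subst hak
        rw [show ((k + 2 + 1 : ℕ) : ZMod (k + 2 + 1)) = ((0 : ℕ) : ZMod (k + 2 + 1)) by
          simp]
        exact cast_ne_cast (by omega) hb' (by omega)
      · exact cast_ne_cast (by omega) hb' (by omega)
    have h3 : (b : ZMod (k + 2 + 1)) + 1 ≠ (a : ZMod (k + 2 + 1)) := by
      have e : ((b : ZMod (k + 2 + 1)) + 1) = ((b + 1 : ℕ) : ZMod (k + 2 + 1)) := by
        push_cast; ring
      rw [e]
      exact cast_ne_cast (by omega) ha' (by omega)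
    exact hcomm _ _ h1 h2 h3
  -- the two Garside-reversal identities
  have P2 := garside_rev t (k + 2) hc (k + 1) (by omega)
  have P1 := garside_rev t (k + 2) hc k (by omega)
  -- instantiate `hrel` at (0, l)
  have h0j : (0 : ZMod (k + 2 + 1)) ≠ ((k + 2 : ℕ) : ZMod (k + 2 + 1)) := by
    rw [show (0 : ZMod (k + 2 + 1)) = ((0 : ℕ) : ZMod (k + 2 + 1)) by simp]
    exact cast_ne_cast (by omega) (by omega) (by omega)
  have H1 : garsideC t 0 (k + 2) = garsideC t 0 (k + 1) * z := by
    have h := hrel 0 ((k + 2 : ℕ)) h0j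
    rw [sub_zero, ZMod.val_cast_of_lt (by omega : k + 2 < k + 2 + 1)] at h
    have e1 : ((k + 2 : ℕ) : ZMod (k + 2 + 1)) + 1 = 0 := by
      have : (((k + 2 + 1) : ℕ) : ZMod (k + 2 + 1)) = 0 := ZMod.natCast_self _
      calc ((k + 2 : ℕ) : ZMod (k + 2 + 1)) + 1
          = ((k + 2 + 1 : ℕ) : ZMod (k + 2 + 1)) := by push_cast; ring
        _ = 0 := this
    have e2 : (0 : ZMod (k + 2 + 1)) - ((k + 2 : ℕ) : ZMod (k + 2 + 1)) = 1 := by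
      linear_combination -e1
    rw [e2, show (1 : ZMod (k + 2 + 1)) = ((1 : ℕ) : ZMod (k + 2 + 1)) by simp,
      ZMod.val_cast_of_lt (by omega : 1 < k + 2 + 1),
      show k + 2 - 1 = k + 1 by omega] at h
    simpa [garsideC_zero] using h
  -- instantiate `hrel` at (0, l - 1)
  have h0j' : (0 : ZMod (k + 2 + 1)) ≠ ((k + 1 : ℕ) : ZMod (k + 2 + 1)) := by
    rw [show (0 : ZMod (k + 2 + 1)) = ((0 : ℕ) : ZMod (k + 2 + 1)) by simp]
    exact cast_ne_cast (by omega) (by omega) (by omega)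
  have H2 : garsideC t 0 (k + 2)
      = garsideC t 0 k * t ((k + 2 : ℕ) : ZMod (k + 2 + 1)) * z ^ 2 := by
    have h := hrel 0 ((k + 1 : ℕ)) h0j'
    rw [sub_zero, ZMod.val_cast_of_lt (by omega : k + 1 < k + 2 + 1)] at h
    have e1 : ((k + 1 : ℕ) : ZMod (k + 2 + 1)) + 2 = 0 := by
      have : (((k + 2 + 1) : ℕ) : ZMod (k + 2 + 1)) = 0 := ZMod.natCast_self _
      calc ((k + 1 : ℕ) : ZMod (k + 2 + 1)) + 2
          = ((k + 2 + 1 : ℕ) : ZMod (k + 2 + 1)) := by push_cast; ring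
        _ = 0 := this
    have e2 : (0 : ZMod (k + 2 + 1)) - ((k + 1 : ℕ) : ZMod (k + 2 + 1))
        = ((2 : ℕ) : ZMod (k + 2 + 1)) := by
      rw [Nat.cast_ofNat]
      linear_combination -e1
    rw [e2, ZMod.val_cast_of_lt (by omega : 2 < k + 2 + 1),
      show k + 1 - 1 = k by omega, show (2 : ℕ) - 1 = 1 by omega] at h
    have e3 : garsideC t ((k + 1 : ℕ) : ZMod (k + 2 + 1)) 1
        = t ((k + 2 : ℕ) : ZMod (k + 2 + 1)) := by
      rw [garsideC_succ, garsideC_zero, chainC_succ, chainC_zero]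
      rw [show ((k + 1 : ℕ) : ZMod (k + 2 + 1)) + ((0 : ℕ) : ZMod (k + 2 + 1)) + 1
        = ((k + 2 : ℕ) : ZMod (k + 2 + 1)) by push_cast; ring]
      simp
    rw [e3] at h
    exact h
  -- unfold one step of revC
  set a := t ((k + 2 : ℕ) : ZMod (k + 2 + 1)) with ha
  have eR : revC t (k + 2) = a * revC t (k + 1) := by
    have : revC t (k + 2) = t (((k + 1 : ℕ) : ZMod (k + 2 + 1)) + 1) * revC t (k + 1) := rfl
    rw [this, show (((k + 1 : ℕ) : ZMod (k + 2 + 1)) + 1)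
      = ((k + 2 : ℕ) : ZMod (k + 2 + 1)) by push_cast; ring]
  -- now the algebra
  have hz : z = a * revC t (k + 1) := by
    have := P2.symm.trans H1
    rw [eR] at this
    exact (mul_left_cancel this).symm
  have hR : revC t (k + 1) = a * z := by
    have h4 : garsideC t 0 (k + 1) * z = garsideC t 0 k * a * z ^ 2 := H1.symm.trans H2
    rw [P1, pow_two] at h4
    have h5 : garsideC t 0 k * (revC t (k + 1) * z) = garsideC t 0 k * (a * (z * z)) := by
      rw [← mul_assoc, ← mul_assoc]; exact h4
    have h6 := mul_left_cancel h5
    have h7 : revC t (k + 1) * z = (a * z) * z := by rw [h6]; group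
    exact mul_right_cancel h7
  have : z = a * (a * z) := by rw [← hR]; exact hz
  have haa : a * a = 1 := by
    have h8 : (a * a) * z = 1 * z := by rw [mul_assoc, ← this, one_mul]
    exact mul_right_cancel h8
  rw [pow_two]
  exact haa


end Stmt1
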